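/- Let $\Pi$ be a set of primes containing at least two distinct primes and let $\tau>2$. Then the set $W^*_{\tau}(\Pi)$ of real numbers $x$ such that $|x-p/q|<q^{-\tau}$ for infinitely many reduced fractions $p/q$ with $q$ divisible by some prime of $\Pi$, but only finitely many with $q$ coprime to all primes of $\Pi$, contains uncountably many Liouville numbers. -/

import Mathlib

open scoped Classical

noncomputable def mseq (u : Set ℕ) : ℕ → ℕ
  | 0 => 1
  | k+1 => (k+3) * mseq u k + (if k ∈ u then 1 else 0)

lemma mseq_pos (u : Set ℕ) (k : ℕ) : 0 < mseq u k := by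
  induction k with
  | zero => simp [mseq]
  | succ k ih => simp only [mseq]; positivity

lemma mseq_succ_ge (u : Set ℕ) (k : ℕ) : (k+3) * mseq u k ≤ mseq u (k+1) := by
  simp [mseq]

lemma mseq_succ_le (u : Set ℕ) (k : ℕ) : mseq u (k+1) ≤ (k+3) * mseq u k + 1 := by
  simp only [mseq]
  split <;> omega

lemma mseq_lt (u : Set ℕ) (k : ℕ) : mseq u k < mseq u (k+1) := by
  have h1 := mseq_succ_ge u k
  have h2 := mseq_pos u k
  nlinarith

lemma mseq_mono (u : Set ℕ) : StrictMono (mseq u) :=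
  strictMono_nat_of_lt_succ (mseq_lt u)

lemma mseq_add_le (u : Set ℕ) (n k : ℕ) : mseq u n + k ≤ mseq u (n + k) := by
  induction k with
  | zero => simp
  | succ k ih =>
    have h := mseq_lt u (n + k)
    have e : n + (k+1) = (n+k)+1 := by omega
    rw [e]; omega

lemma mseq_ge (u : Set ℕ) (k : ℕ) : k + 1 ≤ mseq u k := by
  have h := mseq_add_le u 0 k
  have h0 : mseq u 0 = 1 := rfl
  simp only [Nat.zero_add] at h
  omega

lemma two_pow_le {P : ℕ} (hP : 2 ≤ P) (u : Set ℕ) (k : ℕ) :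
    2 ^ (k+1) ≤ P ^ mseq u k :=
  le_trans (Nat.pow_le_pow_right (by norm_num) (mseq_ge u k))
    (Nat.pow_le_pow_left hP _)

noncomputable def lterm (P : ℕ) (u : Set ℕ) (k : ℕ) : ℝ := ((P:ℝ) ^ mseq u k)⁻¹

lemma Ppos {P : ℕ} (hP : 2 ≤ P) : (0:ℝ) < (P:ℝ) := by
  have : (2:ℝ) ≤ (P:ℝ) := by exact_mod_cast hP
  linarith

lemma lterm_pos {P : ℕ} (hP : 2 ≤ P) (u : Set ℕ) (k : ℕ) : 0 < lterm P u k := by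
  have := Ppos hP
  unfold lterm; positivity

lemma lterm_le {P : ℕ} (hP : 2 ≤ P) (u : Set ℕ) (n k : ℕ) :
    lterm P u (k + n) ≤ ((P:ℝ) ^ mseq u n)⁻¹ * (1/2) ^ k := by
  have hp0 := Ppos hP
  have hm : mseq u n + k ≤ mseq u (n + k) := mseq_add_le u n k
  have h1 : (P:ℝ) ^ (mseq u n) * 2 ^ k ≤ (P:ℝ) ^ mseq u (k + n) := by
    rw [Nat.add_comm k n]
    calc (P:ℝ) ^ (mseq u n) * 2 ^ k ≤ (P:ℝ) ^ (mseq u n) * (P:ℝ) ^ k := by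
          apply mul_le_mul_of_nonneg_left _ (by positivity)
          exact pow_le_pow_left₀ (by norm_num) (by exact_mod_cast hP) k
      _ = (P:ℝ) ^ (mseq u n + k) := by rw [pow_add]
      _ ≤ (P:ℝ) ^ mseq u (n + k) := by
          apply pow_le_pow_right₀ (by exact_mod_cast hP.trans' (by norm_num) : (1:ℝ) ≤ P) hm
  have h2 : ((P:ℝ) ^ mseq u (k+n))⁻¹ ≤ ((P:ℝ)^(mseq u n) * 2^k)⁻¹ :=
    inv_anti₀ (by positivity) h1
  unfold lterm
  calc ((P:ℝ) ^ mseq u (k+n))⁻¹ ≤ ((P:ℝ)^(mseq u n) * 2^k)⁻¹ := h2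
    _ = ((P:ℝ) ^ mseq u n)⁻¹ * (1/2) ^ k := by
        rw [mul_inv, one_div, inv_pow]

lemma summable_lterm {P : ℕ} (hP : 2 ≤ P) (u : Set ℕ) : Summable (lterm P u) := by
  have hg : Summable (fun k => ((P:ℝ) ^ mseq u 0)⁻¹ * (1/2:ℝ) ^ k) :=
    (summable_geometric_of_lt_one (by norm_num) (by norm_num)).mul_left _
  exact Summable.of_nonneg_of_le (fun k => (lterm_pos hP u k).le)
    (fun k => by simpa using lterm_le hP u 0 k) hg

noncomputable def lx (P : ℕ) (u : Set ℕ) : ℝ := ∑' k, lterm P u k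

noncomputable def tailx (P : ℕ) (u : Set ℕ) (n : ℕ) : ℝ := ∑' k, lterm P u (k + n)

lemma summable_tail {P : ℕ} (hP : 2 ≤ P) (u : Set ℕ) (n : ℕ) :
    Summable (fun k => lterm P u (k + n)) :=
  (summable_nat_add_iff n).mpr (summable_lterm hP u)

lemma tailx_pos {P : ℕ} (hP : 2 ≤ P) (u : Set ℕ) (n : ℕ) : 0 < tailx P u n :=
  Summable.tsum_pos (summable_tail hP u n) (fun k => (lterm_pos hP u _).le) 0 (lterm_pos hP u _)

lemma tailx_le {P : ℕ} (hP : 2 ≤ P) (u : Set ℕ) (n : ℕ) :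
    tailx P u n ≤ 2 * ((P:ℝ) ^ mseq u n)⁻¹ := by
  have h1 : tailx P u n ≤ ∑' k, ((P:ℝ) ^ mseq u n)⁻¹ * (1/2) ^ k :=
    Summable.tsum_le_tsum (fun k => lterm_le hP u n k) (summable_tail hP u n)
      ((summable_geometric_of_lt_one (by norm_num) (by norm_num)).mul_left _)
  rw [tsum_mul_left, tsum_geometric_of_lt_one (by norm_num) (by norm_num)] at h1
  calc tailx P u n ≤ ((P:ℝ) ^ mseq u n)⁻¹ * (1 - 1/2)⁻¹ := h1
    _ = 2 * ((P:ℝ) ^ mseq u n)⁻¹ := by ring_nf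

lemma tailx_succ {P : ℕ} (hP : 2 ≤ P) (u : Set ℕ) (n : ℕ) :
    tailx P u n = lterm P u n + tailx P u (n+1) := by
  have h := Summable.tsum_eq_zero_add (summable_tail hP u n)
  unfold tailx
  rw [h]
  congr 1
  · simp
  · apply tsum_congr; intro k; congr 1; omega

noncomputable def Aseq (P : ℕ) (u : Set ℕ) (n : ℕ) : ℕ :=
  ∑ j ∈ Finset.range (n+1), P ^ (mseq u n - mseq u j)

lemma lx_eq {P : ℕ} (hP : 2 ≤ P) (u : Set ℕ) (n : ℕ) :
    lx P u = (Aseq P u n : ℝ) / (P:ℝ) ^ mseq u n + tailx P u (n+1) := by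
  have hsum := summable_lterm hP u
  have h := Summable.sum_add_tsum_nat_add (f := lterm P u) (n+1) hsum
  have hp0 := Ppos hP
  have hsum_eq : ∑ j ∈ Finset.range (n+1), lterm P u j
      = (Aseq P u n : ℝ) / (P:ℝ) ^ mseq u n := by
    rw [Aseq, Nat.cast_sum, Finset.sum_div]
    apply Finset.sum_congr rfl
    intro j hj
    have hjn : mseq u j ≤ mseq u n :=
      (mseq_mono u).monotone (by have := Finset.mem_range.mp hj; omega)
    rw [lterm, Nat.cast_pow, pow_sub₀ _ (ne_of_gt hp0) hjn]
    rw [mul_comm, mul_div_assoc, div_self (by positivity), mul_one]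
  rw [lx, ← h, hsum_eq, tailx]

lemma not_dvd_Aseq {P : ℕ} (hP : 2 ≤ P) (u : Set ℕ) (n : ℕ) : ¬ P ∣ Aseq P u n := by
  intro hdvd
  have hd : P ∣ ∑ j ∈ Finset.range n, P ^ (mseq u n - mseq u j) := by
    apply Finset.dvd_sum
    intro j hj
    have hjn : mseq u j < mseq u n := mseq_mono u (Finset.mem_range.mp hj)
    exact dvd_pow_self P (by omega)
  rw [Aseq, Finset.sum_range_succ, Nat.sub_self, pow_zero] at hdvd
  have h1 : P ∣ 1 := by
    have h2 := Nat.dvd_sub hdvd hd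
    simpa using h2
  have := Nat.le_of_dvd (by norm_num) h1
  omega

lemma Aseq_pos {P : ℕ} (hP : 2 ≤ P) (u : Set ℕ) (n : ℕ) : 0 < Aseq P u n := by
  rw [Aseq, Finset.sum_range_succ]
  have : 0 < P ^ (mseq u n - mseq u n) := Nat.pow_pos (by omega)
  omega

-- error bounds packaged
lemma lx_err_pos {P : ℕ} (hP : 2 ≤ P) (u : Set ℕ) (n : ℕ) :
    0 < lx P u - (Aseq P u n : ℝ) / (P:ℝ) ^ mseq u n := by
  rw [lx_eq hP u n]; have := tailx_pos hP u (n+1); linarith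

lemma lx_err_le {P : ℕ} (hP : 2 ≤ P) (u : Set ℕ) (n : ℕ) :
    lx P u - (Aseq P u n : ℝ) / (P:ℝ) ^ mseq u n ≤ 2 * ((P:ℝ) ^ mseq u (n+1))⁻¹ := by
  rw [lx_eq hP u n]; have := tailx_le hP u (n+1); linarith

lemma liouville_lx {P : ℕ} (hP : 2 ≤ P) (u : Set ℕ) : Liouville (lx P u) := by
  intro n
  have hp0 := Ppos hP
  refine ⟨(Aseq P u n : ℤ), ((P:ℤ) ^ mseq u n), ?_, ?_, ?_⟩
  · have h1 : (2:ℤ) ≤ (P:ℤ) := by exact_mod_cast hP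
    calc (1:ℤ) < 2 := by norm_num
      _ ≤ (P:ℤ) := h1
      _ ≤ (P:ℤ) ^ mseq u n := le_self_pow₀ (by omega) (by have := mseq_pos u n; omega)
  · have := lx_err_pos hP u n
    push_cast
    intro h
    rw [h] at this
    simp at this
  · push_cast
    have h1 := lx_err_le hP u n
    have h2 := lx_err_pos hP u n
    have habs : |lx P u - (Aseq P u n : ℝ) / (P:ℝ) ^ mseq u n|
        = lx P u - (Aseq P u n : ℝ) / (P:ℝ) ^ mseq u n := abs_of_pos h2
    rw [habs]
    -- need 2 * (P^m(n+1))⁻¹ < 1 / (P^mn)^n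
    have hm : mseq u n * n + 2 ≤ mseq u (n+1) := by
      have := mseq_succ_ge u n
      have hmn := mseq_pos u n
      nlinarith
    have hkey : 2 * ((P:ℝ) ^ mseq u (n+1))⁻¹ < 1 / ((P:ℝ) ^ mseq u n) ^ n := by
      rw [← pow_mul]
      have hlt : (P:ℝ) ^ (mseq u n * n) * 2 < (P:ℝ) ^ mseq u (n+1) := by
        calc (P:ℝ) ^ (mseq u n * n) * 2 < (P:ℝ) ^ (mseq u n * n) * (P:ℝ)^2 := by
              have h2P : (2:ℝ) ≤ (P:ℝ) := by exact_mod_cast hP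
              have : (2:ℝ) < (P:ℝ)^2 := by nlinarith
              exact mul_lt_mul_of_pos_left this (by positivity)
          _ = (P:ℝ) ^ (mseq u n * n + 2) := by rw [pow_add]
          _ ≤ (P:ℝ) ^ mseq u (n+1) := by
              apply pow_le_pow_right₀ (by exact_mod_cast hP.trans' (by norm_num) : (1:ℝ) ≤ P)
              omega
      have h2 : (2:ℝ) / (P:ℝ) ^ mseq u (n+1) < 1 / (P:ℝ) ^ (mseq u n * n) := by
        rw [div_lt_div_iff₀ (by positivity) (by positivity)]
        nlinarith [hlt]
      calc 2 * ((P:ℝ) ^ mseq u (n+1))⁻¹ = 2 / (P:ℝ) ^ mseq u (n+1) := by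
            rw [div_eq_mul_inv]
        _ < _ := h2
    calc lx P u - (Aseq P u n : ℝ) / (P:ℝ) ^ mseq u n ≤ 2 * ((P:ℝ) ^ mseq u (n+1))⁻¹ := h1
      _ < 1 / ((P:ℝ) ^ mseq u n) ^ n := hkey

lemma mseq_congr {u v : Set ℕ} {n : ℕ} (h : ∀ j < n, (j ∈ u ↔ j ∈ v)) :
    mseq u n = mseq v n := by
  induction n with
  | zero => rfl
  | succ n ih =>
    have h1 : mseq u n = mseq v n := ih (fun j hj => h j (by omega))
    simp only [mseq, h1]
    congr 1
    simp only [h n (by omega)]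

lemma lx_lt {P : ℕ} (hP : 2 ≤ P) {u v : Set ℕ} {k : ℕ}
    (hagree : ∀ j < k, (j ∈ u ↔ j ∈ v)) (hu : k ∉ u) (hv : k ∈ v) :
    lx P v < lx P u := by
  have hp0 := Ppos hP
  have hmeq : mseq u k = mseq v k := mseq_congr hagree
  have hAeq : (Aseq P u k : ℝ) / (P:ℝ) ^ mseq u k = (Aseq P v k : ℝ) / (P:ℝ) ^ mseq v k := by
    rw [hmeq]
    congr 2
    rw [Aseq, Aseq]
    apply Finset.sum_congr rfl
    intro j hj
    have : mseq u j = mseq v j := mseq_congr (fun i hi => hagree i (by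
      have := Finset.mem_range.mp hj; omega))
    rw [this, hmeq]
  -- exponents at k+1
  have hmu : mseq u (k+1) = (k+3) * mseq u k := by simp [mseq, hu]
  have hmv : mseq v (k+1) = (k+3) * mseq v k + 1 := by simp [mseq, hv]
  set N := (k+3) * mseq u k with hN
  -- tail comparison
  have htv : tailx P v (k+1) ≤ 2 * ((P:ℝ) ^ (N+1))⁻¹ := by
    have := tailx_le hP v (k+1)
    rw [hmv, ← hmeq] at this
    exact this
  have htu : ((P:ℝ) ^ N)⁻¹ < tailx P u (k+1) := by
    rw [tailx_succ hP u (k+1)]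
    have h1 : lterm P u (k+1) = ((P:ℝ) ^ N)⁻¹ := by rw [lterm, hmu]
    have h2 := tailx_pos hP u (k+2)
    linarith [h1.ge]
  have hcmp : 2 * ((P:ℝ) ^ (N+1))⁻¹ ≤ ((P:ℝ) ^ N)⁻¹ := by
    have hineq : 2 * (P:ℝ) ^ N ≤ (P:ℝ) ^ (N+1) := by
      rw [pow_succ]
      have h2P : (2:ℝ) ≤ (P:ℝ) := by exact_mod_cast hP
      nlinarith [pow_pos hp0 N]
    have hA : (0:ℝ) < (P:ℝ) ^ N := by positivity
    have hB : (0:ℝ) < (P:ℝ) ^ (N+1) := by positivity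
    have h3 : (2:ℝ)/((P:ℝ)^(N+1)) ≤ 1/((P:ℝ)^N) := by
      rw [div_le_div_iff₀ hB hA]; nlinarith
    calc 2 * ((P:ℝ) ^ (N+1))⁻¹ = 2/((P:ℝ)^(N+1)) := (div_eq_mul_inv _ _).symm
      _ ≤ 1/((P:ℝ)^N) := h3
      _ = ((P:ℝ)^N)⁻¹ := one_div _
  have := lx_eq hP u k
  have := lx_eq hP v k
  have hlt : tailx P v (k+1) < tailx P u (k+1) := lt_of_le_of_lt (htv.trans hcmp) htu
  linarith [lx_eq hP u k, lx_eq hP v k, hAeq]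

lemma lx_inj {P : ℕ} (hP : 2 ≤ P) : Function.Injective (lx P) := by
  intro u v huv
  by_contra hne
  have hex : ∃ k, ¬ ((k ∈ u) ↔ (k ∈ v)) := by
    by_contra hall
    push_neg at hall
    exact hne (Set.ext fun k => hall k)
  classical
  let k := Nat.find hex
  have hk : ¬ ((k ∈ u) ↔ (k ∈ v)) := Nat.find_spec hex
  have hagree : ∀ j < k, (j ∈ u ↔ j ∈ v) := fun j hj => by
    have := Nat.find_min hex hj
    tauto
  by_cases hku : k ∈ u
  · have hkv : k ∉ v := by tauto
    have := lx_lt hP (fun j hj => (hagree j hj).symm) hkv hku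
    rw [huv] at this; exact lt_irrefl _ this
  · have hkv : k ∈ v := by tauto
    have := lx_lt hP hagree hku hkv
    rw [huv] at this; exact lt_irrefl _ this

lemma rat_dist_lb {p c : ℤ} {q s : ℕ} (hq : 0 < q) (hs : 0 < s)
    (hne : (p:ℝ)/(q:ℝ) ≠ (c:ℝ)/(s:ℝ)) :
    1/((q:ℝ)*(s:ℝ)) ≤ |(p:ℝ)/(q:ℝ) - (c:ℝ)/(s:ℝ)| := by
  have hqr : (0:ℝ) < (q:ℝ) := by exact_mod_cast hq
  have hsr : (0:ℝ) < (s:ℝ) := by exact_mod_cast hs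
  have hnum : p * (s:ℤ) - c * (q:ℤ) ≠ 0 := by
    intro h0
    apply hne
    have h1 : (p:ℝ) * (s:ℝ) = (c:ℝ) * (q:ℝ) := by exact_mod_cast sub_eq_zero.mp h0
    field_simp
    linarith [h1]
  rw [div_sub_div _ _ (ne_of_gt hqr) (ne_of_gt hsr), abs_div,
    abs_of_pos (by positivity : (0:ℝ) < (q:ℝ)*(s:ℝ))]
  have h1 : (1:ℝ) ≤ |(p:ℝ)*(s:ℝ) - (q:ℝ)*(c:ℝ)| := by
    have h2 : (1:ℤ) ≤ |p*(s:ℤ) - (q:ℤ)*c| := by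
      apply Int.one_le_abs
      intro h0
      exact hnum (by linarith [h0] <;> omega)
    calc (1:ℝ) ≤ |((p*(s:ℤ) - (q:ℤ)*c : ℤ) : ℝ)| := by exact_mod_cast h2
      _ = |(p:ℝ)*(s:ℝ) - (q:ℝ)*(c:ℝ)| := by push_cast; ring_nf
  gcongr

lemma rpow_one_div_ge {c Q : ℝ} {D : ℕ} (hc : 0 ≤ c) (hD : 0 < D) (h : c^D ≤ Q) :
    c ≤ Q ^ ((1:ℝ)/(D:ℝ)) := by
  have hQ : 0 ≤ Q := le_trans (by positivity) h
  have h1 : (c^D : ℝ) ^ ((1:ℝ)/(D:ℝ)) ≤ Q ^ ((1:ℝ)/(D:ℝ)) :=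
    Real.rpow_le_rpow (by positivity) h (by positivity)
  calc c = (c^D : ℝ) ^ ((1:ℝ)/(D:ℝ)) := by
        rw [← Real.rpow_natCast c D, ← Real.rpow_mul hc]
        rw [mul_one_div, div_self (by exact_mod_cast hD.ne' : (D:ℝ) ≠ 0), Real.rpow_one]
    _ ≤ _ := h1

-- if p/q = A_n / P^{m n} as reals then P^{m n} divides q
lemma pow_dvd_of_eq {P : ℕ} (hPP : P.Prime) (u : Set ℕ) (n : ℕ) {p : ℤ} {q : ℕ}
    (hq : 0 < q)
    (heq : (p:ℝ)/(q:ℝ) = (Aseq P u n : ℝ)/((P:ℝ) ^ mseq u n)) :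
    P ^ mseq u n ∣ q := by
  have hP : 2 ≤ P := hPP.two_le
  have hp0 := Ppos hP
  have hqr : (0:ℝ) < (q:ℝ) := by exact_mod_cast hq
  have hcross : (p:ℝ) * ((P:ℝ) ^ mseq u n) = (Aseq P u n : ℝ) * (q:ℝ) := by
    field_simp at heq
    linarith [heq]
  have hint : p * ((P:ℤ) ^ mseq u n) = (Aseq P u n : ℤ) * (q:ℤ) := by
    exact_mod_cast hcross
  have hdvd : ((P:ℤ) ^ mseq u n) ∣ (q:ℤ) * (Aseq P u n : ℤ) := by
    rw [mul_comm]
    exact ⟨p, by linarith [hint]⟩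
  have hcop : Int.gcd ((P:ℤ) ^ mseq u n) (Aseq P u n : ℤ) = 1 := by
    have h1 : Nat.Coprime (P ^ mseq u n) (Aseq P u n) :=
      Nat.Coprime.pow_left _ (hPP.coprime_iff_not_dvd.mpr (not_dvd_Aseq hP u n))
    have : ((P:ℤ) ^ mseq u n) = ((P ^ mseq u n : ℕ) : ℤ) := by push_cast; ring
    rw [this, Int.gcd_natCast_natCast]
    exact h1
  have := Int.dvd_of_dvd_mul_left_of_gcd_one hdvd hcop
  exact_mod_cast this

lemma infinite_good {P : ℕ} (hPP : P.Prime) (u : Set ℕ) (τ : ℝ) (hτ : 2 < τ) :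
    {q : ℕ | 0 < q ∧ (∃ p : ℤ, Int.gcd p (q:ℤ) = 1 ∧
      |lx P u - (p:ℝ)/(q:ℝ)| < 1/(q:ℝ)^τ) ∧ P ∣ q}.Infinite := by
  have hP : 2 ≤ P := hPP.two_le
  have hp0 := Ppos hP
  set K1 := ⌈τ⌉₊ + 1 with hK1
  have hmem : ∀ k, K1 ≤ k → P ^ mseq u k ∈ {q : ℕ | 0 < q ∧ (∃ p : ℤ, Int.gcd p (q:ℤ) = 1 ∧
      |lx P u - (p:ℝ)/(q:ℝ)| < 1/(q:ℝ)^τ) ∧ P ∣ q} := by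
    intro k hk
    have hk1 : 1 ≤ k := le_trans (by omega) hk
    refine ⟨Nat.pow_pos (by omega), ⟨(Aseq P u k : ℤ), ?_, ?_⟩, ?_⟩
    · rw [Int.gcd_natCast_natCast]
      exact ((hPP.coprime_iff_not_dvd.mpr (not_dvd_Aseq hP u k)).symm.pow_right _)
    · -- the approximation inequality
      have hqcast : ((P ^ mseq u k : ℕ) : ℝ) = (P:ℝ) ^ mseq u k := by push_cast; ring
      push_cast
      have herr_pos := lx_err_pos hP u k
      have herr_le := lx_err_le hP u k
      rw [abs_of_pos herr_pos]
      have hb1 : (1:ℝ) ≤ (P:ℝ) := by exact_mod_cast (by omega : 1 ≤ P)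
      have hQ1 : (1:ℝ) ≤ (P:ℝ) ^ mseq u k := one_le_pow₀ hb1
      have hτk : τ ≤ ((k+2 : ℕ) : ℝ) := by
        calc τ ≤ (⌈τ⌉₊ : ℝ) := Nat.le_ceil τ
          _ ≤ ((k+2 : ℕ) : ℝ) := by exact_mod_cast (by omega : ⌈τ⌉₊ ≤ k+2)
      have h1 : ((P:ℝ)^mseq u k) ^ τ ≤ ((P:ℝ)^mseq u k) ^ (k+2 : ℕ) := by
        rw [← Real.rpow_natCast ((P:ℝ)^mseq u k) (k+2)]
        exact Real.rpow_le_rpow_of_exponent_le hQ1 hτk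
      have hexp : mseq u k * (k+2) + 2 ≤ mseq u (k+1) := by
        have hge := mseq_succ_ge u k
        have hmk : k + 1 ≤ mseq u k := mseq_ge u k
        nlinarith
      have hlt : (P:ℝ)^(mseq u k*(k+2)) * 2 < (P:ℝ) ^ mseq u (k+1) := by
        calc (P:ℝ)^(mseq u k*(k+2)) * 2 < (P:ℝ)^(mseq u k*(k+2)) * (P:ℝ)^2 := by
              have h2P : (2:ℝ) ≤ (P:ℝ) := by exact_mod_cast hP
              have : (2:ℝ) < (P:ℝ)^2 := by nlinarith
              exact mul_lt_mul_of_pos_left this (by positivity)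
          _ = (P:ℝ) ^ (mseq u k*(k+2) + 2) := by rw [pow_add]
          _ ≤ (P:ℝ) ^ mseq u (k+1) := pow_le_pow_right₀ hb1 hexp
      have hkey : 2 * ((P:ℝ) ^ mseq u (k+1))⁻¹ < 1/((P:ℝ)^(mseq u k * (k+2))) := by
        have h2 : (2:ℝ) / (P:ℝ) ^ mseq u (k+1) < 1 / (P:ℝ) ^ (mseq u k * (k+2)) := by
          rw [div_lt_div_iff₀ (by positivity) (by positivity)]
          nlinarith [hlt]
        calc 2 * ((P:ℝ) ^ mseq u (k+1))⁻¹ = 2 / (P:ℝ) ^ mseq u (k+1) := by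
              rw [div_eq_mul_inv]
          _ < _ := h2
      calc lx P u - (Aseq P u k : ℝ)/(P:ℝ)^mseq u k ≤ 2 * ((P:ℝ) ^ mseq u (k+1))⁻¹ := herr_le
        _ < 1/((P:ℝ)^(mseq u k * (k+2))) := hkey
        _ = 1/(((P:ℝ)^mseq u k) ^ (k+2:ℕ)) := by rw [pow_mul]
        _ ≤ 1/(((P:ℝ)^mseq u k) ^ τ) := by
            apply one_div_le_one_div_of_le (Real.rpow_pos_of_pos (by positivity) τ) h1
    · exact dvd_pow_self P (by have := mseq_pos u k; omega)
  have hinj : Function.Injective (fun k : ℕ => P ^ mseq u (K1 + k)) := by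
    intro a b hab
    simp only at hab
    have h1 := Nat.pow_right_injective hP hab
    have h2 := (mseq_mono u).injective h1
    omega
  exact Set.infinite_of_injective_forall_mem hinj (fun k => hmem _ (by omega))

set_option maxHeartbeats 1000000 in
lemma finite_bad_aux {P : ℕ} (hPP : P.Prime) (u : Set ℕ) (τ : ℝ) (hτ : 2 < τ) :
    ∃ Q0 : ℕ, ∀ q : ℕ, Q0 < q →
      (∃ p : ℤ, |lx P u - (p:ℝ)/(q:ℝ)| < 1/(q:ℝ)^τ) → P ∣ q := by
  classical
  have hP : 2 ≤ P := hPP.two_le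
  have hp0 := Ppos hP
  have hb1 : (1:ℝ) ≤ (P:ℝ) := by exact_mod_cast (by omega : 1 ≤ P)
  have h2P : (2:ℝ) ≤ (P:ℝ) := by exact_mod_cast hP
  obtain ⟨d, hd⟩ := exists_nat_one_div_lt (by linarith : (0:ℝ) < τ - 2)
  set D := d + 1 with hD
  have hDpos : 0 < D := by omega
  have hDr : (0:ℝ) < (D:ℝ) := by exact_mod_cast hDpos
  have hσ : (1:ℝ)/(D:ℝ) < τ - 2 := by
    have : ((d:ℝ) + 1) = (D:ℝ) := by rw [hD]; push_cast; ring
    rwa [this] at hd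
  set K0 := 4*D + 6 with hK0
  refine ⟨P ^ (mseq u K0) + 2^D, ?_⟩
  intro q hq ⟨p, happ⟩
  have hpowpos : 0 < P ^ mseq u K0 := Nat.pow_pos (show 0 < P by omega)
  have h2Dpos : 0 < 2^D := Nat.pow_pos (by omega)
  have hq0 : 0 < q := by omega
  have hqK0 : P ^ mseq u K0 ≤ q := by omega
  have hq2D : 2^D ≤ q := by omega
  -- find the scale k
  set pred := fun j => P ^ mseq u j ≤ q with hpred
  have hK0q : K0 ≤ q := by
    have h1 : K0 < 2 ^ K0 := Nat.lt_two_pow_self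
    have h2 : 2 ^ K0 ≤ 2 ^ mseq u K0 := Nat.pow_le_pow_right (by omega) (by
      have := mseq_ge u K0; omega)
    have h3 : 2 ^ mseq u K0 ≤ P ^ mseq u K0 := Nat.pow_le_pow_left hP _
    omega
  set k := Nat.findGreatest pred q with hkdef
  have hpredK0 : pred K0 := hqK0
  have hkK0 : K0 ≤ k := Nat.le_findGreatest hK0q hpredK0
  have hk1 : P ^ mseq u k ≤ q := Nat.findGreatest_spec hK0q hpredK0
  have hkq : k < q := by
    rcases Nat.lt_or_ge k q with h | h
    · exact h
    · exfalso
      have hkq' : k ≤ q := Nat.findGreatest_le q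
      have hkeq : k = q := by omega
      have hqq : P ^ mseq u q ≤ q := hkeq ▸ hk1
      have h1 : q < 2 ^ q := Nat.lt_two_pow_self
      have h2 : 2 ^ q ≤ 2 ^ mseq u q := Nat.pow_le_pow_right (by omega) (by
        have := mseq_ge u q; omega)
      have h3 : 2 ^ mseq u q ≤ P ^ mseq u q := Nat.pow_le_pow_left hP _
      omega
  have hk2 : q < P ^ mseq u (k+1) := by
    have := Nat.findGreatest_is_greatest (show k < k+1 by omega) (show k+1 ≤ q by omega)
    omega
  clear_value k
  -- abbreviations
  set Mk := mseq u k with hMk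
  set Mk1 := mseq u (k+1) with hMk1
  set Mk2 := mseq u (k+2) with hMk2
  have hMkpos : 0 < Mk := mseq_pos u k
  have hMkge : k + 1 ≤ Mk := mseq_ge u k
  have hMk1ge : (k+3) * Mk ≤ Mk1 := mseq_succ_ge u k
  have hMk2ge : (k+4) * Mk1 ≤ Mk2 := mseq_succ_ge u (k+1)
  have hMk1ge' : k + 2 ≤ Mk1 := mseq_ge u (k+1)
  have hQ1 : (1:ℝ) ≤ (q:ℝ) := by exact_mod_cast hq0
  have hQ0 : (0:ℝ) < (q:ℝ) := by linarith
  -- reduce exponent τ to σ = 2 + 1/D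
  have hqσ : (q:ℝ) ^ ((2:ℝ) + 1/(D:ℝ)) ≤ (q:ℝ) ^ τ :=
    Real.rpow_le_rpow_of_exponent_le hQ1 (by linarith)
  have happσ : |lx P u - (p:ℝ)/(q:ℝ)| < 1/((q:ℝ) ^ ((2:ℝ) + 1/(D:ℝ))) := by
    refine lt_of_lt_of_le happ (one_div_le_one_div_of_le ?_ hqσ)
    exact Real.rpow_pos_of_pos hQ0 _
  set R := (q:ℝ) ^ ((1:ℝ)/(D:ℝ)) with hR
  have hRpos : 0 < R := Real.rpow_pos_of_pos hQ0 _
  have hR2 : (2:ℝ) ≤ R := by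
    apply rpow_one_div_ge (by norm_num) hDpos
    exact_mod_cast hq2D
  have hqσ_eq : (q:ℝ) ^ ((2:ℝ) + 1/(D:ℝ)) = (q:ℝ)^2 * R := by
    rw [Real.rpow_add hQ0, hR]
    congr 1
    rw [← Real.rpow_natCast (q:ℝ) 2]
    norm_num
  -- real versions of scale facts
  have hk1r : ((P:ℝ) ^ Mk) ≤ (q:ℝ) := by exact_mod_cast hk1
  have hk2r : (q:ℝ) < (P:ℝ) ^ Mk1 := by exact_mod_cast hk2
  have herr_pos_k := lx_err_pos hP u k
  have herr_le_k := lx_err_le hP u k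
  have herr_pos_k1 := lx_err_pos hP u (k+1)
  have herr_le_k1 := lx_err_le hP u (k+1)
  have hskpos : 0 < P ^ Mk := Nat.pow_pos (show 0 < P by omega)
  have hsk1pos : 0 < P ^ Mk1 := Nat.pow_pos (show 0 < P by omega)
  by_cases hcase : 4 * q * P ^ Mk < P ^ Mk1
  case pos =>
    -- q's fraction must equal A_k / P^Mk
    have heq : (p:ℝ)/(q:ℝ) = (Aseq P u k : ℝ)/((P:ℝ) ^ Mk) := by
      by_contra hne
      have hlow := rat_dist_lb hq0 hskpos (c := (Aseq P u k : ℤ))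
        (by push_cast; exact_mod_cast hne)
      have hup : |(p:ℝ)/(q:ℝ) - (Aseq P u k : ℝ)/((P:ℝ)^Mk)|
          < 1/((q:ℝ)^2 * R) + 2 * ((P:ℝ) ^ Mk1)⁻¹ := by
        have h1 : |(p:ℝ)/(q:ℝ) - (Aseq P u k : ℝ)/((P:ℝ)^Mk)|
            ≤ |lx P u - (p:ℝ)/(q:ℝ)| + |lx P u - (Aseq P u k : ℝ)/((P:ℝ)^Mk)| := by
          rw [abs_sub_comm (lx P u) ((p:ℝ)/(q:ℝ))]
          exact abs_sub_le _ _ _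
        have h2 : |lx P u - (Aseq P u k : ℝ)/((P:ℝ)^Mk)| ≤ 2 * ((P:ℝ) ^ Mk1)⁻¹ := by
          rw [abs_of_pos herr_pos_k]; exact herr_le_k
        rw [hqσ_eq] at happσ
        linarith
      have hhalf1 : 1/((q:ℝ)^2 * R) ≤ 1/(2 * (q:ℝ) * ((P:ℝ)^Mk)) := by
        apply one_div_le_one_div_of_le (by positivity)
        nlinarith [hk1r, hR2, hQ1]
      have hhalf2 : 2 * ((P:ℝ) ^ Mk1)⁻¹ ≤ 1/(2 * (q:ℝ) * ((P:ℝ)^Mk)) := by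
        have hc : 4 * (q:ℝ) * (P:ℝ)^Mk ≤ (P:ℝ)^Mk1 := by exact_mod_cast hcase.le
        have h2 : (2:ℝ)/((P:ℝ)^Mk1) ≤ 1/(2 * (q:ℝ) * ((P:ℝ)^Mk)) := by
          rw [div_le_div_iff₀ (by positivity) (by positivity)]
          linarith [hc]
        calc 2 * ((P:ℝ) ^ Mk1)⁻¹ = 2/((P:ℝ)^Mk1) := (div_eq_mul_inv _ _).symm
          _ ≤ _ := h2
      have hcast : ((P ^ Mk : ℕ):ℝ) = (P:ℝ)^Mk := by push_cast; ring
      rw [hcast] at hlow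
      have : (1:ℝ)/((q:ℝ) * ((P:ℝ)^Mk)) < 1/((q:ℝ) * ((P:ℝ)^Mk)) := by
        calc (1:ℝ)/((q:ℝ) * ((P:ℝ)^Mk)) ≤ _ := hlow
          _ < 1/((q:ℝ)^2 * R) + 2 * ((P:ℝ) ^ Mk1)⁻¹ := hup
          _ ≤ 1/(2 * (q:ℝ) * ((P:ℝ)^Mk)) + 1/(2 * (q:ℝ) * ((P:ℝ)^Mk)) := by linarith
          _ = 1/((q:ℝ) * ((P:ℝ)^Mk)) := by field_simp; ring
      exact lt_irrefl _ this
    have hdvd := pow_dvd_of_eq hPP u k hq0 heq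
    exact dvd_trans (dvd_pow_self P (by omega)) hdvd
  case neg =>
    exfalso
    push_neg at hcase
    -- q's fraction cannot equal A_{k+1} / P^{Mk1}
    have hne : (p:ℝ)/(q:ℝ) ≠ (Aseq P u (k+1) : ℝ)/((P:ℝ) ^ Mk1) := by
      intro heq
      have hdvd := pow_dvd_of_eq hPP u (k+1) hq0 heq
      have hle := Nat.le_of_dvd hq0 hdvd
      rw [← hMk1] at hle
      omega
    have hlow := rat_dist_lb hq0 hsk1pos (c := (Aseq P u (k+1) : ℤ))
      (by push_cast; exact_mod_cast hne)
    have hup : |(p:ℝ)/(q:ℝ) - (Aseq P u (k+1) : ℝ)/((P:ℝ)^Mk1)|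
        < 1/((q:ℝ)^2 * R) + 2 * ((P:ℝ) ^ Mk2)⁻¹ := by
      have h1 : |(p:ℝ)/(q:ℝ) - (Aseq P u (k+1) : ℝ)/((P:ℝ)^Mk1)|
          ≤ |lx P u - (p:ℝ)/(q:ℝ)| + |lx P u - (Aseq P u (k+1) : ℝ)/((P:ℝ)^Mk1)| := by
        rw [abs_sub_comm (lx P u) ((p:ℝ)/(q:ℝ))]
        exact abs_sub_le _ _ _
      have h2 : |lx P u - (Aseq P u (k+1) : ℝ)/((P:ℝ)^Mk1)| ≤ 2 * ((P:ℝ) ^ Mk2)⁻¹ := by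
        rw [abs_of_pos herr_pos_k1]; exact herr_le_k1
      rw [hqσ_eq] at happσ
      linarith
    -- R is large: q ≥ (8 P^Mk)^D
    have hP2 : 4 ≤ P^2 := by
      calc (4:ℕ) = 2^2 := by norm_num
        _ ≤ P^2 := Nat.pow_le_pow_left hP 2
    have hq8 : (8 * P ^ Mk)^D ≤ q := by
      have h8 : (8:ℕ) ≤ P^3 := by
        calc (8:ℕ) = 2^3 := by norm_num
          _ ≤ P^3 := Nat.pow_le_pow_left hP 3
      have hstep1 : (8 * P ^ Mk)^D ≤ P ^ (3*D + Mk*D) := by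
        calc (8 * P^Mk)^D ≤ (P^3 * P^Mk)^D :=
              Nat.pow_le_pow_left (Nat.mul_le_mul_right _ h8) D
          _ = P^((3+Mk)*D) := by rw [← pow_add, ← pow_mul]
          _ = P^(3*D + Mk*D) := by congr 1; ring
      have hstep2 : 4 * P ^ (3*D + Mk*D) * P ^ Mk ≤ 4 * q * P ^ Mk := by
        have h4 : 4 * P ^ (3*D + Mk*D) * P ^ Mk ≤ P ^ (3*D + Mk*D + Mk + 2) := by
          calc 4 * P ^ (3*D + Mk*D) * P ^ Mk
              = (P ^ (3*D + Mk*D) * P ^ Mk) * 4 := by ring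
            _ ≤ (P ^ (3*D + Mk*D) * P ^ Mk) * P^2 := Nat.mul_le_mul_left _ hP2
            _ = P ^ (3*D + Mk*D + Mk + 2) := by rw [← pow_add, ← pow_add]
        have hexpo : 3*D + Mk*D + Mk + 2 ≤ Mk1 := by
          have h1 : (4*D+6)*Mk ≤ k*Mk := Nat.mul_le_mul_right Mk hkK0
          have h2 : (k+3)*Mk = k*Mk + 3*Mk := by ring
          have h3 : (4*D+6)*Mk = 4*(Mk*D)+6*Mk := by ring
          have h4' : D*1 ≤ D*Mk := Nat.mul_le_mul_left D hMkpos
          have h5 : D*Mk = Mk*D := by ring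
          omega
        calc 4 * P ^ (3*D + Mk*D) * P ^ Mk ≤ P ^ (3*D + Mk*D + Mk + 2) := h4
          _ ≤ P ^ Mk1 := Nat.pow_le_pow_right (by omega) hexpo
          _ ≤ 4 * q * P ^ Mk := hcase
      have hfin := Nat.le_of_mul_le_mul_right hstep2
        (Nat.pow_pos (show 0 < P by omega))
      calc (8 * P ^ Mk)^D ≤ P ^ (3*D + Mk*D) := hstep1
        _ ≤ q := by omega
    have hR8 : 8 * (P:ℝ)^Mk ≤ R := by
      apply rpow_one_div_ge (by positivity) hDpos
      calc (8 * (P:ℝ)^Mk)^D = ((8 * P ^ Mk : ℕ) : ℝ)^D := by push_cast; ring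
        _ = (((8 * P ^ Mk)^D : ℕ) : ℝ) := by push_cast; ring
        _ ≤ (q:ℝ) := by exact_mod_cast hq8
    have hcaser : (P:ℝ)^Mk1 ≤ 4 * (q:ℝ) * (P:ℝ)^Mk := by exact_mod_cast hcase
    have hhalf1 : 1/((q:ℝ)^2 * R) ≤ 1/(2 * (q:ℝ) * ((P:ℝ)^Mk1)) := by
      apply one_div_le_one_div_of_le (by positivity)
      have s1 : (q:ℝ)^2 * (8*(P:ℝ)^Mk) ≤ (q:ℝ)^2 * R :=
        mul_le_mul_of_nonneg_left hR8 (by positivity)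
      have s2 : 2*(q:ℝ)*((P:ℝ)^Mk1) ≤ 2*(q:ℝ)*(4*(q:ℝ)*(P:ℝ)^Mk) :=
        mul_le_mul_of_nonneg_left hcaser (by positivity)
      nlinarith [s1, s2]
    have hhalf2 : 2 * ((P:ℝ) ^ Mk2)⁻¹ ≤ 1/(2 * (q:ℝ) * ((P:ℝ)^Mk1)) := by
      have hMk2big : 4 * P ^ Mk1 * P ^ Mk1 ≤ P ^ Mk2 := by
        have hexpo : Mk1 + Mk1 + 2 ≤ Mk2 := by
          have h2 : (k+4)*Mk1 = k*Mk1 + 4*Mk1 := by ring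
          omega
        calc 4 * P ^ Mk1 * P ^ Mk1 = (P^Mk1 * P^Mk1) * 4 := by ring
          _ ≤ (P^Mk1 * P^Mk1) * P^2 := Nat.mul_le_mul_left _ hP2
          _ = P^(Mk1 + Mk1 + 2) := by rw [← pow_add, ← pow_add]
          _ ≤ P ^ Mk2 := Nat.pow_le_pow_right (by omega) hexpo
      have hMk2bigr : 4 * (q:ℝ) * (P:ℝ)^Mk1 ≤ (P:ℝ)^Mk2 := by
        have h1 : 4 * (P:ℝ)^Mk1 * (P:ℝ)^Mk1 ≤ (P:ℝ)^Mk2 := by exact_mod_cast hMk2big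
        nlinarith [hk2r, pow_pos hp0 Mk1]
      have h2 : (2:ℝ)/((P:ℝ)^Mk2) ≤ 1/(2 * (q:ℝ) * ((P:ℝ)^Mk1)) := by
        rw [div_le_div_iff₀ (by positivity) (by positivity)]
        linarith [hMk2bigr]
      calc 2 * ((P:ℝ) ^ Mk2)⁻¹ = 2/((P:ℝ)^Mk2) := (div_eq_mul_inv _ _).symm
        _ ≤ _ := h2
    have hcast : ((P ^ Mk1 : ℕ):ℝ) = (P:ℝ)^Mk1 := by push_cast; ring
    rw [hcast] at hlow
    have : (1:ℝ)/((q:ℝ) * ((P:ℝ)^Mk1)) < 1/((q:ℝ) * ((P:ℝ)^Mk1)) := by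
      calc (1:ℝ)/((q:ℝ) * ((P:ℝ)^Mk1)) ≤ _ := hlow
        _ < 1/((q:ℝ)^2 * R) + 2 * ((P:ℝ) ^ Mk2)⁻¹ := hup
        _ ≤ 1/(2 * (q:ℝ) * ((P:ℝ)^Mk1)) + 1/(2 * (q:ℝ) * ((P:ℝ)^Mk1)) := by linarith
        _ = 1/((q:ℝ) * ((P:ℝ)^Mk1)) := by field_simp; ring
    exact lt_irrefl _ this

theorem liminf_set_contains_uncountably_many_liouville
    (Pr : Set ℕ) (hPr : ∀ p ∈ Pr, p.Prime)
    (htwo : ∃ p q, p ∈ Pr ∧ q ∈ Pr ∧ p ≠ q)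
    (τ : ℝ) (hτ : 2 < τ)
    (Wstar : Set ℝ)
    (hWstar : Wstar = {x : ℝ |
      {q : ℕ | 0 < q ∧ (∃ p : ℤ, Int.gcd p (q : ℤ) = 1 ∧
          |x - (p : ℝ) / (q : ℝ)| < 1 / (q : ℝ) ^ τ) ∧ ∃ π ∈ Pr, π ∣ q}.Infinite ∧
      {q : ℕ | 0 < q ∧ (∃ p : ℤ, Int.gcd p (q : ℤ) = 1 ∧
          |x - (p : ℝ) / (q : ℝ)| < 1 / (q : ℝ) ^ τ) ∧ ∀ π ∈ Pr, ¬ π ∣ q}.Finite}) :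
    ¬ {x : ℝ | x ∈ Wstar ∧ Liouville x}.Countable := by
  obtain ⟨P, _, hPmem, _, _⟩ := htwo
  have hPP : P.Prime := hPr P hPmem
  have hP : 2 ≤ P := hPP.two_le
  set f : Set ℕ → ℝ := lx P with hf
  have hinj : Function.Injective f := lx_inj hP
  have hmem : ∀ u : Set ℕ, f u ∈ {x : ℝ | x ∈ Wstar ∧ Liouville x} := by
    intro u
    refine ⟨?_, liouville_lx hP u⟩
    rw [hWstar]
    refine ⟨?_, ?_⟩
    · apply (infinite_good hPP u τ hτ).mono
      rintro q ⟨h1, h2, h3⟩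
      exact ⟨h1, h2, ⟨P, hPmem, h3⟩⟩
    · obtain ⟨Q0, hQ0⟩ := finite_bad_aux hPP u τ hτ
      apply Set.Finite.subset (Set.finite_le_nat Q0)
      rintro q ⟨h1, h2, h3⟩
      show q ≤ Q0
      by_contra hgt
      push_neg at hgt
      obtain ⟨p, _, hp2⟩ := h2
      exact h3 P hPmem (hQ0 q hgt ⟨p, hp2⟩)
  intro hcount
  have hsub : Set.range f ⊆ {x : ℝ | x ∈ Wstar ∧ Liouville x} := by
    rintro x ⟨u, rfl⟩
    exact hmem u
  have hcr : (Set.range f).Countable := hcount.mono hsub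
  haveI := hcr.to_subtype
  have hinj' : Function.Injective (Set.rangeFactorization f) :=
    fun a b h => hinj (congrArg Subtype.val h)
  haveI : Countable (Set ℕ) := Function.Injective.countable hinj'
  obtain ⟨g, hg⟩ := exists_injective_nat (Set ℕ)
  exact Function.cantor_injective g hg
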